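/- Let R(θ) = P·R̂(θ) be the Yang–Baxter matrix for even N, with blocks determined by (2.8), and let λ(θ) be a scalar with λ(θ) ≠ ±e^{(m_{ab}^{(ε)}+m_{ba}^{(ε)})θ/2} for all a, b, ε. Then R(θ) − λ(θ)I is invertible and its inverse is X(θ) = −(1/2)∑_{ε=±}∑_{a,b=1}^{N} [λ² − e^{(m_{ab}^{(ε)}+m_{ba}^{(ε)})θ}]^{-1} { λ[(aa)⊗(bb) + ε(aā)⊗(bb̄)] + e^{m_{ba}^{(ε)}θ}[(ab)⊗(ba) + ε(ab̄)⊗(bā)] }. -/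

import Mathlib

open Matrix
open scoped Kronecker

noncomputable section

/-- The `N × N` matrix unit `(ab)`. -/
def E {N : ℕ} (a b : Fin N) : Matrix (Fin N) (Fin N) ℂ := Matrix.single a b 1

/-- Sign `ε = ±1` coded by a Boolean. -/
def sgn (ε : Bool) : ℂ := if ε then 1 else -1

/-- The nested-sequence projector `P_{ab}^{(ε)}` for `N = 2n` (`ā = 2n+1-a` via `Fin.rev`). -/
def P {N : ℕ} (ε : Bool) (a b : Fin N) : Matrix (Fin N × Fin N) (Fin N × Fin N) ℂ :=
  (1 / 2 : ℂ) •
    (E a a ⊗ₖ E b b + E a.rev a.rev ⊗ₖ E b.rev b.rev +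
      sgn ε • (E a a.rev ⊗ₖ E b b.rev + E a.rev a ⊗ₖ E b.rev b))

/-- Embedding of `{1,…,n}` into `{1,…,2n}`. -/
def emb {n : ℕ} (i : Fin n) : Fin (2 * n) := Fin.castLE (by omega) i

/-- `R̂(θ) = ∑_ε ∑_{i,j=1}^n e^{m_{ij}^{(ε)}θ}(P_{ij}^{(ε)} + P_{i j̄}^{(ε)})`. -/
def Rhat {n : ℕ} (m : Bool → Fin (2 * n) → Fin (2 * n) → ℝ) (θ : ℝ) :
    Matrix (Fin (2 * n) × Fin (2 * n)) (Fin (2 * n) × Fin (2 * n)) ℂ :=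
  ∑ ε : Bool, ∑ i : Fin n, ∑ j : Fin n,
    (Real.exp (m ε (emb i) (emb j) * θ) : ℂ) •
      (P ε (emb i) (emb j) + P ε (emb i) (emb j).rev)

/-- The flip matrix `𝐏 = ∑_{a,b}(ab)⊗(ba)`. -/
def flipP (N : ℕ) : Matrix (Fin N × Fin N) (Fin N × Fin N) ℂ :=
  ∑ a : Fin N, ∑ b : Fin N, E a b ⊗ₖ E b a

/-- The closed-form candidate inverse `X(θ) = (R(θ) − λI)⁻¹` of eq. (5.4). -/
def X {N : ℕ} (m : Bool → Fin N → Fin N → ℝ) (θ : ℝ) (lam : ℂ) :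
    Matrix (Fin N × Fin N) (Fin N × Fin N) ℂ :=
  (-(1 / 2) : ℂ) • ∑ ε : Bool, ∑ a : Fin N, ∑ b : Fin N,
    (lam ^ 2 - Complex.exp (((m ε a b + m ε b a) * θ : ℝ) : ℂ))⁻¹ •
      (lam • (E a a ⊗ₖ E b b + sgn ε • (E a a.rev ⊗ₖ E b b.rev)) +
        Complex.exp (((m ε b a * θ : ℝ)) : ℂ) •
          (E a b ⊗ₖ E b a + sgn ε • (E a b.rev ⊗ₖ E b a.rev)))

/-! ### Auxiliary lemmas -/

lemma E_apply {N : ℕ} (a b p r : Fin N) :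
    E a b p r = if a = p ∧ b = r then (1 : ℂ) else 0 := rfl

lemma rev_ne {n : ℕ} (x : Fin (2 * n)) : x.rev ≠ x := by
  intro h
  have := Fin.val_rev x
  omega

@[simp] lemma emb_val {n : ℕ} (i : Fin n) : (emb i).val = i.val := rfl

/-- The equivalence `Fin n ⊕ Fin n ≃ Fin (2n)`. -/
def splitEquiv (n : ℕ) : (Fin n ⊕ Fin n) ≃ Fin (2 * n) where
  toFun := Sum.elim (fun i => emb i) (fun i => (emb i).rev)
  invFun := fun x =>
    if h : (x : ℕ) < n then Sum.inl ⟨x, h⟩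
    else Sum.inr ⟨x.rev, by have := Fin.val_rev x; have := x.isLt; omega⟩
  left_inv := by
    rintro (i | i) <;> dsimp only [Sum.elim_inl, Sum.elim_inr]
    · rw [dif_pos (by simpa using i.isLt)]
      exact congrArg Sum.inl (Fin.ext (by simp))
    · have h1 := Fin.val_rev (emb i)
      have h2 := i.isLt
      have h3 : ((emb i).rev : ℕ) = 2 * n - (i + 1) := by simp only [emb_val] at h1 ⊢; omega
      rw [dif_neg (by omega)]
      congr 1
      apply Fin.ext
      have h4 := Fin.val_rev (emb i).rev
      simp only [h3, emb_val] at h4 ⊢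
      omega
  right_inv := by
    intro x
    have h1 := Fin.val_rev x
    have h2 := x.isLt
    dsimp only
    by_cases h : (x : ℕ) < n
    · rw [dif_pos h]
      dsimp only [Sum.elim_inl]
      apply Fin.ext
      simp
    · rw [dif_neg h]
      dsimp only [Sum.elim_inr]
      apply Fin.ext
      have h3 := Fin.val_rev (emb (⟨x.rev, by omega⟩ : Fin n))
      simp only [emb_val] at h3 ⊢
      omega

lemma sum_split {n : ℕ} {α : Type*} [AddCommMonoid α] (f : Fin (2 * n) → α) :
    ∑ a, f a = ∑ i : Fin n, (f (emb i) + f ((emb i).rev)) := by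
  rw [← Fintype.sum_equiv (splitEquiv n) (fun s => f (splitEquiv n s)) f (fun s => rfl)]
  rw [Fintype.sum_sum_type]
  rw [← Finset.sum_add_distrib]
  rfl

lemma P_rev_rev {N : ℕ} (ε : Bool) (a b : Fin N) : P ε a.rev b.rev = P ε a b := by
  unfold P
  simp only [Fin.rev_rev]
  congr 1
  rw [add_comm (E a.rev a.rev ⊗ₖ E b.rev b.rev) (E a a ⊗ₖ E b b)]
  congr 2
  rw [add_comm (E a.rev a ⊗ₖ E b.rev b) (E a a.rev ⊗ₖ E b b.rev)]

lemma P_rev_left {N : ℕ} (ε : Bool) (a b : Fin N) : P ε a.rev b = P ε a b.rev := by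
  unfold P
  simp only [Fin.rev_rev]
  congr 1
  rw [add_comm (E a.rev a.rev ⊗ₖ E b b) (E a a ⊗ₖ E b.rev b.rev)]
  congr 2
  rw [add_comm (E a.rev a ⊗ₖ E b b.rev) (E a a.rev ⊗ₖ E b.rev b)]

/-- collapse of a double delta sum -/
lemma dcollapse {N : ℕ} (α β : Fin N) (f : Fin N → Fin N → ℂ) :
    ∑ u : Fin N, ∑ v : Fin N,
      (if α = u then (1 : ℂ) else 0) * ((if β = v then (1 : ℂ) else 0) * f u v) = f α β := by
  simp [boole_mul, Finset.sum_ite_eq]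

lemma dcollapse' {N : ℕ} (α β : Fin N) (f : Fin N → Fin N → ℂ) :
    (∑ u : Fin N,
      (if α = u then (1 : ℂ) else 0) * (∑ v : Fin N, (if β = v then (1 : ℂ) else 0) * f u v)) =
      f α β := by
  simp [boole_mul, Finset.sum_ite_eq]

lemma sum_two {N : ℕ} {f : Fin N → ℂ} {x z : Fin N} (hxz : x ≠ z)
    (h : ∀ a, a ≠ x → a ≠ z → f a = 0) : ∑ a, f a = f x + f z := by
  rw [← Finset.sum_subset (Finset.subset_univ {x, z})
    (fun a _ ha => h a (by simp at ha; tauto) (by simp at ha; tauto))]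
  exact Finset.sum_pair hxz

lemma sum_rot {A B C : Type*} [Fintype A] [Fintype B] [Fintype C] (f : A → B → C → ℂ) :
    ∑ u : A, ∑ v : B, ∑ ε : C, f u v ε = ∑ ε : C, ∑ u : A, ∑ v : B, f u v ε := by
  calc ∑ u : A, ∑ v : B, ∑ ε : C, f u v ε
      = ∑ u : A, ∑ ε : C, ∑ v : B, f u v ε :=
        Finset.sum_congr rfl fun u _ => Finset.sum_comm
    _ = ∑ ε : C, ∑ u : A, ∑ v : B, f u v ε := Finset.sum_comm

lemma one_entry {N : ℕ} (p q r s : Fin N) :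
    (1 : Matrix (Fin N × Fin N) (Fin N × Fin N) ℂ) (p, q) (r, s) =
      (if p = r then (1 : ℂ) else 0) * (if q = s then 1 else 0) := by
  rw [Matrix.one_apply]
  by_cases h1 : p = r <;> by_cases h2 : q = s <;> simp [Prod.ext_iff, h1, h2]

lemma flip_apply {N : ℕ} (x y u v : Fin N) :
    flipP N (x, y) (u, v) = (if y = u then (1 : ℂ) else 0) * (if x = v then 1 else 0) := by
  unfold flipP
  simp only [Matrix.sum_apply, Matrix.kroneckerMap_apply, E_apply]
  rw [Fintype.sum_eq_single x (fun a ha => Finset.sum_eq_zero fun b _ => by simp [ha])]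
  rw [Fintype.sum_eq_single y (fun b hb => by simp [hb])]
  simp

lemma flip_mul_apply {N : ℕ} (A : Matrix (Fin N × Fin N) (Fin N × Fin N) ℂ)
    (x y : Fin N) (w : Fin N × Fin N) :
    (flipP N * A) (x, y) w = A (y, x) w := by
  rw [Matrix.mul_apply, Fintype.sum_prod_type]
  simp only [flip_apply, mul_assoc]
  exact dcollapse y x (fun u v => A (u, v) w)

lemma X_apply {N : ℕ} (m : Bool → Fin N → Fin N → ℝ) (θ : ℝ) (lam : ℂ) (p q u v : Fin N) :
    X m θ lam (p, q) (u, v) = ∑ ε : Bool,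
      (-(1/2) * (lam ^ 2 - Complex.exp (((m ε p q + m ε q p) * θ : ℝ) : ℂ))⁻¹ * lam *
          ((if p = u then (1:ℂ) else 0) * (if q = v then 1 else 0))
        + -(1/2) * (lam ^ 2 - Complex.exp (((m ε p q + m ε q p) * θ : ℝ) : ℂ))⁻¹ * lam * sgn ε *
          ((if p.rev = u then (1:ℂ) else 0) * (if q.rev = v then 1 else 0))
        + -(1/2) * (lam ^ 2 - Complex.exp (((m ε p q + m ε q p) * θ : ℝ) : ℂ))⁻¹ *
            Complex.exp ((m ε q p * θ : ℝ) : ℂ) *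
          ((if q = u then (1:ℂ) else 0) * (if p = v then 1 else 0))
        + -(1/2) * (lam ^ 2 - Complex.exp (((m ε p q + m ε q p) * θ : ℝ) : ℂ))⁻¹ *
            Complex.exp ((m ε q p * θ : ℝ) : ℂ) * sgn ε *
          ((if q.rev = u then (1:ℂ) else 0) * (if p.rev = v then 1 else 0))) := by
  unfold X
  simp only [Matrix.smul_apply, Matrix.sum_apply, Matrix.add_apply, Matrix.kroneckerMap_apply,
    E_apply, smul_eq_mul]
  rw [Finset.mul_sum]
  apply Finset.sum_congr rfl
  intro ε _
  rw [Fintype.sum_eq_single p (fun a ha => Finset.sum_eq_zero fun b _ => by simp [ha])]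
  rw [Fintype.sum_eq_single q (fun b hb => by simp [hb])]
  simp only [eq_self_iff_true, true_and]
  ring

lemma X_mul_apply {N : ℕ} (m : Bool → Fin N → Fin N → ℝ) (θ : ℝ) (lam : ℂ)
    (G : Matrix (Fin N × Fin N) (Fin N × Fin N) ℂ) (p q : Fin N) (w : Fin N × Fin N) :
    (X m θ lam * G) (p, q) w = ∑ ε : Bool,
      (-(1/2) * (lam ^ 2 - Complex.exp (((m ε p q + m ε q p) * θ : ℝ) : ℂ))⁻¹ * lam *
          G (p, q) w
        + -(1/2) * (lam ^ 2 - Complex.exp (((m ε p q + m ε q p) * θ : ℝ) : ℂ))⁻¹ * lam * sgn ε *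
          G (p.rev, q.rev) w
        + -(1/2) * (lam ^ 2 - Complex.exp (((m ε p q + m ε q p) * θ : ℝ) : ℂ))⁻¹ *
            Complex.exp ((m ε q p * θ : ℝ) : ℂ) * G (q, p) w
        + -(1/2) * (lam ^ 2 - Complex.exp (((m ε p q + m ε q p) * θ : ℝ) : ℂ))⁻¹ *
            Complex.exp ((m ε q p * θ : ℝ) : ℂ) * sgn ε * G (q.rev, p.rev) w) := by
  rw [Matrix.mul_apply, Fintype.sum_prod_type]
  simp only [X_apply, Finset.sum_mul]
  rw [sum_rot]
  apply Finset.sum_congr rfl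
  intro ε _
  simp only [add_mul, Finset.sum_add_distrib, mul_assoc, ← Finset.mul_sum, dcollapse, dcollapse']

section withm
variable {n : ℕ} (m : Bool → Fin (2 * n) → Fin (2 * n) → ℝ) (θ : ℝ)
variable (hm : ∀ ε a b, m ε a b = m ε a.rev b ∧ m ε a b = m ε a b.rev)
include hm

/-- `R̂` as a sum over the full range. -/
lemma RhatFull :
    Rhat m θ = (1 / 4 : ℂ) • ∑ ε : Bool, ∑ a : Fin (2 * n), ∑ b : Fin (2 * n),
      (Real.exp (m ε a b * θ) : ℂ) • (P ε a b + P ε a b.rev) := by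
  have hm1 : ∀ ε a b, m ε a.rev b = m ε a b := fun ε a b => ((hm ε a b).1).symm
  have hm2 : ∀ ε a b, m ε a b.rev = m ε a b := fun ε a b => ((hm ε a b).2).symm
  unfold Rhat
  conv_rhs => rw [Finset.smul_sum]
  apply Finset.sum_congr rfl
  intro ε _
  simp only [sum_split]
  rw [Finset.smul_sum]
  apply Finset.sum_congr rfl
  intro i _
  rw [← Finset.sum_add_distrib, Finset.smul_sum]
  apply Finset.sum_congr rfl
  intro j _
  simp only [Fin.rev_rev, hm1, hm2, P_rev_left, P_rev_rev]
  module

lemma Rhat_apply (x y r s : Fin (2 * n)) :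
    Rhat m θ (x, y) (r, s) = (1/2) * ∑ ε : Bool,
      (Real.exp (m ε x y * θ) : ℂ) *
        (((if x = r then (1:ℂ) else 0) * (if y = s then 1 else 0)) +
          sgn ε * ((if x.rev = r then (1:ℂ) else 0) * (if y.rev = s then 1 else 0))) := by
  have hm1 : ∀ ε a b, m ε a.rev b = m ε a b := fun ε a b => ((hm ε a b).1).symm
  have hm2 : ∀ ε a b, m ε a b.rev = m ε a b := fun ε a b => ((hm ε a b).2).symm
  rw [RhatFull m θ hm]
  simp only [Matrix.smul_apply, Matrix.sum_apply, smul_eq_mul]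
  rw [Finset.mul_sum, Finset.mul_sum]
  apply Finset.sum_congr rfl
  intro ε _
  have hx : x ≠ x.rev := Ne.symm (rev_ne x)
  have hy : y ≠ y.rev := Ne.symm (rev_ne y)
  simp only [P, Matrix.smul_apply, Matrix.add_apply, Matrix.kroneckerMap_apply, E_apply,
    smul_eq_mul]
  rw [sum_two hx (fun a ha1 ha2 => Finset.sum_eq_zero fun b _ => by
    simp [Fin.rev_eq_iff, ha1, ha2])]
  rw [sum_two hy (fun b hb1 hb2 => by simp [Fin.rev_eq_iff, hb1, hb2])]
  rw [sum_two hy (fun b hb1 hb2 => by simp [Fin.rev_eq_iff, hb1, hb2])]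
  simp only [Fin.rev_rev, hm1, hm2]
  simp [rev_ne]
  ring

end withm

set_option maxHeartbeats 2000000 in
/-- For even `N = 2n`, with `λ(θ) ≠ ± e^{(m_{ab}^{(ε)}+m_{ba}^{(ε)})θ/2}` for all `a, b, ε`,
the matrix `R(θ) − λ(θ)I` (with `R(θ) = 𝐏R̂(θ)`) is invertible and its inverse is the
closed form `X(θ)`. -/
theorem stmt_15 (n : ℕ) (m : Bool → Fin (2 * n) → Fin (2 * n) → ℝ)
    (hm : ∀ ε a b, m ε a b = m ε a.rev b ∧ m ε a b = m ε a b.rev) (θ : ℝ) (lam : ℂ)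
    (hlam : ∀ (ε : Bool) (a b : Fin (2 * n)),
      lam ≠ Complex.exp (((m ε a b + m ε b a) * θ / 2 : ℝ) : ℂ) ∧
      lam ≠ -Complex.exp (((m ε a b + m ε b a) * θ / 2 : ℝ) : ℂ)) :
    X m θ lam * (flipP (2 * n) * Rhat m θ - lam • 1) = 1 ∧
      (flipP (2 * n) * Rhat m θ - lam • 1) * X m θ lam = 1 := by
  have hm1 : ∀ ε a b, m ε a.rev b = m ε a b := fun ε a b => ((hm ε a b).1).symm
  have hm2 : ∀ ε a b, m ε a b.rev = m ε a b := fun ε a b => ((hm ε a b).2).symm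
  have key : X m θ lam * (flipP (2 * n) * Rhat m θ - lam • 1) = 1 := by
    ext ⟨p, q⟩ ⟨r, s⟩
    rw [X_mul_apply]
    have he : ∀ ε : Bool, Complex.exp (((m ε p q + m ε q p) * θ : ℝ) : ℂ) =
        Complex.exp ((m ε q p * θ : ℝ) : ℂ) * Complex.exp ((m ε p q * θ : ℝ) : ℂ) := by
      intro ε
      rw [← Complex.exp_add]
      congr 1
      push_cast
      ring
    have hc : ∀ ε : Bool,
        lam ^ 2 - Complex.exp (((m ε p q + m ε q p) * θ : ℝ) : ℂ) ≠ 0 := by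
      intro ε
      have h1 := (hlam ε p q).1
      have h2 := (hlam ε p q).2
      set μ := Complex.exp (((m ε p q + m ε q p) * θ / 2 : ℝ) : ℂ) with hμdef
      have hμ : Complex.exp (((m ε p q + m ε q p) * θ : ℝ) : ℂ) = μ * μ := by
        rw [hμdef, ← Complex.exp_add]
        congr 1
        push_cast
        ring
      rw [hμ]
      intro h0
      have hfac : (lam - μ) * (lam + μ) = 0 := by linear_combination h0
      rcases mul_eq_zero.mp hfac with h | h
      · exact h1 (by linear_combination h)
      · exact h2 (by linear_combination h)
    simp only [Matrix.sub_apply, Matrix.smul_apply, smul_eq_mul, flip_mul_apply,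
      Rhat_apply m θ hm, one_entry, Fin.rev_rev, hm1, hm2]
    simp only [Complex.ofReal_exp] at *
    simp only [Fintype.sum_bool, show sgn true = 1 from rfl, show sgn false = -1 from rfl]
    rw [he true, he false]
    have h1 : lam ^ 2 - Complex.exp ((m true q p : ℂ) * (θ : ℂ)) *
        Complex.exp ((m true p q : ℂ) * (θ : ℂ)) ≠ 0 := by
      have h := hc true
      rw [he true] at h
      push_cast at h
      exact h
    have h2 : lam ^ 2 - Complex.exp ((m false q p : ℂ) * (θ : ℂ)) *
        Complex.exp ((m false p q : ℂ) * (θ : ℂ)) ≠ 0 := by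
      have h := hc false
      rw [he false] at h
      push_cast at h
      exact h
    push_cast
    set A1 := (if p = r then (1:ℂ) else 0) with hA1
    set A2 := (if q = s then (1:ℂ) else 0) with hA2
    set A3 := (if p.rev = r then (1:ℂ) else 0) with hA3
    set A4 := (if q.rev = s then (1:ℂ) else 0) with hA4
    set A5 := (if q = r then (1:ℂ) else 0) with hA5
    set A6 := (if p = s then (1:ℂ) else 0) with hA6
    set A7 := (if q.rev = r then (1:ℂ) else 0) with hA7
    set A8 := (if p.rev = s then (1:ℂ) else 0) with hA8
    set B1 := Complex.exp ((m true q p : ℂ) * (θ : ℂ)) with hB1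
    set B2 := Complex.exp ((m true p q : ℂ) * (θ : ℂ)) with hB2
    set B3 := Complex.exp ((m false q p : ℂ) * (θ : ℂ)) with hB3
    set B4 := Complex.exp ((m false p q : ℂ) * (θ : ℂ)) with hB4
    set C1 := (lam ^ 2 - B1 * B2)⁻¹ with hCd1
    set C2 := (lam ^ 2 - B3 * B4)⁻¹ with hCd2
    have hC1 : C1 * (lam ^ 2 - B1 * B2) = 1 := inv_mul_cancel₀ h1
    have hC2 : C2 * (lam ^ 2 - B3 * B4) = 1 := inv_mul_cancel₀ h2
    linear_combination (1/2*(A1*A2 + A3*A4)) * hC1 + (1/2*(A1*A2 - A3*A4)) * hC2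
  exact ⟨key, mul_eq_one_comm.mp key⟩
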